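/- For every integer k ≥ 3 and all points p, q ∈ S_k, there exists a continuous path γ : [0,1] → ℝ^k with γ(0) = p, γ(1) = q, γ(t) ∈ S_k for all t, and ‖γ(s) − γ(t)‖₁ = |s − t| · ‖p − q‖₁ for all s, t ∈ [0,1]. In particular the order-k rectilinear cone S_k, with the metric induced from the L¹ norm of ℝ^k, is a geodesic space whose induced metric coincides with its intrinsic (shortest-path) metric; equivalently, the order-k rectilinear cone embeds isometrically into ℝ^k with the L¹ metric. -/

import Mathlib

/-- The order-`k` rectilinear cone: the union, over `i : ZMod k`, of the quadrants
`Q i = {x : ZMod k → ℝ | ∀ m, 0 ≤ x m, and x m = 0 for m ∉ {i, i+1}}`,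
a subset of `ℝ^k` carrying the `L¹` metric. -/
def rectCone (k : ℕ) [NeZero k] : Set (ZMod k → ℝ) :=
  ⋃ i : ZMod k, {x | (∀ m, 0 ≤ x m) ∧ ∀ m, m ≠ i → m ≠ i + 1 → x m = 0}

/-- For every `k ≥ 3`, any two points `p, q` of the order-`k` rectilinear cone are joined
by a continuous path inside the cone along which the `L¹` distance behaves affinely:
`‖γ s − γ t‖₁ = |s − t| · ‖p − q‖₁`.  Hence the cone, with the metric induced from the
`L¹` norm of `ℝ^k`, is a geodesic space whose induced and intrinsic metrics coincide. -/
theorem rectCone_geodesic (k : ℕ) [NeZero k] (hk : 3 ≤ k)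
    (p q : ZMod k → ℝ) (hp : p ∈ rectCone k) (hq : q ∈ rectCone k) :
    ∃ γ : ℝ → ZMod k → ℝ,
      ContinuousOn γ (Set.Icc 0 1) ∧
      γ 0 = p ∧ γ 1 = q ∧
      (∀ t ∈ Set.Icc (0 : ℝ) 1, γ t ∈ rectCone k) ∧
      (∀ s ∈ Set.Icc (0 : ℝ) 1, ∀ t ∈ Set.Icc (0 : ℝ) 1,
        (∑ m, |γ s m - γ t m|) = |s - t| * ∑ m, |p m - q m|) := by
  classical
  simp only [rectCone, Set.mem_iUnion, Set.mem_setOf_eq] at hp hq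
  obtain ⟨i, hpnn, hpz⟩ := hp
  obtain ⟨j, hqnn, hqz⟩ := hq
  -- the "midpoint" of the geodesic: the coordinatewise min of p and q
  set c : ZMod k → ℝ := fun r => min (p r) (q r) with hc
  have hcnn : ∀ r, 0 ≤ c r := fun r => le_min (hpnn r) (hqnn r)
  set D : ℝ := ∑ r, |p r - q r| with hDdef
  set A : ℝ := ∑ r, |p r - c r| with hAdef
  set B : ℝ := ∑ r, |c r - q r| with hBdef
  have habs : ∀ r, |p r - c r| + |c r - q r| = |p r - q r| := by
    intro r
    rcases le_total (p r) (q r) with h | h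
    · simp [hc, min_eq_left h]
    · simp [hc, min_eq_right h]
  have hAB : A + B = D := by
    rw [hAdef, hBdef, hDdef, ← Finset.sum_add_distrib]
    exact Finset.sum_congr rfl fun r _ => habs r
  have hAnn : 0 ≤ A := Finset.sum_nonneg fun r _ => abs_nonneg _
  have hBnn : 0 ≤ B := Finset.sum_nonneg fun r _ => abs_nonneg _
  have hDnn : 0 ≤ D := Finset.sum_nonneg fun r _ => abs_nonneg _
  by_cases hD0 : D = 0
  · -- degenerate case : p = q, constant path
    have hpq : p = q := by
      funext r
      have h0 := (Finset.sum_eq_zero_iff_of_nonneg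
        (fun r _ => abs_nonneg (p r - q r))).1 hD0 r (Finset.mem_univ r)
      exact sub_eq_zero.1 (abs_eq_zero.1 h0)
    refine ⟨fun _ => p, continuousOn_const, rfl, by rw [hpq], fun t _ => ?_, fun s _ t _ => ?_⟩
    · exact Set.mem_iUnion.2 ⟨i, hpnn, hpz⟩
    · simp [hD0]
  · have hDpos : 0 < D := lt_of_le_of_ne hDnn (Ne.symm hD0)
    have hA0 : A = 0 → ∀ r, p r = c r := by
      intro h r
      have h0 := (Finset.sum_eq_zero_iff_of_nonneg
        (fun r _ => abs_nonneg (p r - c r))).1 h r (Finset.mem_univ r)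
      exact sub_eq_zero.1 (abs_eq_zero.1 h0)
    have hB0 : B = 0 → ∀ r, c r = q r := by
      intro h r
      have h0 := (Finset.sum_eq_zero_iff_of_nonneg
        (fun r _ => abs_nonneg (c r - q r))).1 h r (Finset.mem_univ r)
      exact sub_eq_zero.1 (abs_eq_zero.1 h0)
    -- the path: go from p to c (proportionally), then from c to q
    set γ : ℝ → ZMod k → ℝ := fun t =>
      if t ≤ A / D then (fun r => p r + (t * D / A) * (c r - p r))
      else (fun r => c r + ((t * D - A) / B) * (q r - c r)) with hγ
    -- interpolation parameter bounds
    have hu01 : ∀ t : ℝ, 0 ≤ t → t ≤ A / D → 0 ≤ t * D / A ∧ t * D / A ≤ 1 := by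
      intro t ht0 htb
      refine ⟨div_nonneg (mul_nonneg ht0 hDpos.le) hAnn, ?_⟩
      by_cases hA : A = 0
      · simp [hA]
      · have hApos : 0 < A := lt_of_le_of_ne hAnn (Ne.symm hA)
        rw [div_le_one hApos]
        exact (le_div_iff₀ hDpos).1 htb
    have hv01 : ∀ t : ℝ, t ≤ 1 → A / D < t →
        0 ≤ (t * D - A) / B ∧ (t * D - A) / B ≤ 1 := by
      intro t ht1 htb
      have hADlt : A < t * D := (div_lt_iff₀ hDpos).1 htb
      refine ⟨div_nonneg (by linarith) hBnn, ?_⟩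
      by_cases hB : B = 0
      · simp [hB]
      · have hBpos : 0 < B := lt_of_le_of_ne hBnn (Ne.symm hB)
        rw [div_le_one hBpos]
        nlinarith
    -- positivity of B when the second branch is used at a parameter ≤ 1
    have hBpos : ∀ t : ℝ, t ≤ 1 → ¬ t ≤ A / D → 0 < B := by
      intro t ht1 htb
      have h1 : A / D < t := lt_of_not_ge htb
      have h2 : A < t * D := (div_lt_iff₀ hDpos).1 h1
      nlinarith
    -- generic straight-segment computation
    have hseg : ∀ (x y : ZMod k → ℝ) (a b : ℝ),
        (∑ r, |(x r + a * (y r - x r)) - (x r + b * (y r - x r))|)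
          = |a - b| * ∑ r, |x r - y r| := by
      intro x y a b
      rw [Finset.mul_sum]
      refine Finset.sum_congr rfl fun r _ => ?_
      rw [show (x r + a * (y r - x r)) - (x r + b * (y r - x r))
        = (a - b) * -(x r - y r) by ring, abs_mul, abs_neg]
    -- cross-segment coordinatewise computation, using that c is the coordinatewise min
    have hcross : ∀ (r : ZMod k) (u v : ℝ), 0 ≤ u → u ≤ 1 → 0 ≤ v → v ≤ 1 →
        |(p r + u * (c r - p r)) - (c r + v * (q r - c r))|
          = (1 - u) * |p r - c r| + v * |c r - q r| := by
      intro r u v hu0 hu1 hv0 hv1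
      rcases le_total (p r) (q r) with h | h
      · have hcr : c r = p r := min_eq_left h
        rw [hcr, show (p r + u * (p r - p r)) - (p r + v * (q r - p r))
            = -(v * (q r - p r)) by ring, abs_neg, abs_mul, sub_self, abs_zero,
          mul_zero, zero_add, abs_of_nonneg hv0, abs_sub_comm (q r) (p r)]
      · have hcr : c r = q r := min_eq_right h
        rw [hcr, show (p r + u * (q r - p r)) - (q r + v * (q r - q r))
            = (1 - u) * (p r - q r) by ring, abs_mul, sub_self, abs_zero,
          mul_zero, add_zero, abs_of_nonneg (sub_nonneg.2 hu1),
          abs_of_nonneg (sub_nonneg.2 h)]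
    -- the key affine-distance identity (for s ≤ t)
    have key : ∀ s ∈ Set.Icc (0:ℝ) 1, ∀ t ∈ Set.Icc (0:ℝ) 1, s ≤ t →
        (∑ r, |γ s r - γ t r|) = (t - s) * D := by
      rintro s ⟨hs0, hs1⟩ t ⟨ht0, ht1⟩ hst
      by_cases hsb : s ≤ A / D <;> by_cases htb : t ≤ A / D
      · -- both points on the first segment
        have es : ∀ r, γ s r = p r + (s * D / A) * (c r - p r) := by
          intro r; simp only [hγ]; rw [if_pos hsb]
        have et : ∀ r, γ t r = p r + (t * D / A) * (c r - p r) := by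
          intro r; simp only [hγ]; rw [if_pos htb]
        rw [Finset.sum_congr rfl fun r _ => by rw [es r, et r], hseg p c]
        by_cases hA : A = 0
        · have hs' : s = 0 := by rw [hA, zero_div] at hsb; linarith
          have ht' : t = 0 := by rw [hA, zero_div] at htb; linarith
          simp [hA, hs', ht']
        · have hApos : 0 < A := lt_of_le_of_ne hAnn (Ne.symm hA)
          rw [show s * D / A - t * D / A = -(((t - s) * D) / A) by field_simp; ring,
            abs_neg, abs_div, abs_of_nonneg (mul_nonneg (by linarith) hDpos.le),
            abs_of_pos hApos]
          field_simp
          rfl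
      · -- s on the first segment, t on the second
        have es : ∀ r, γ s r = p r + (s * D / A) * (c r - p r) := by
          intro r; simp only [hγ]; rw [if_pos hsb]
        have et : ∀ r, γ t r = c r + ((t * D - A) / B) * (q r - c r) := by
          intro r; simp only [hγ]; rw [if_neg htb]
        obtain ⟨hu0, hu1⟩ := hu01 s hs0 hsb
        obtain ⟨hv0, hv1⟩ := hv01 t ht1 (lt_of_not_ge htb)
        rw [Finset.sum_congr rfl fun r _ => by
            rw [es r, et r, hcross r _ _ hu0 hu1 hv0 hv1],
          Finset.sum_add_distrib, ← Finset.mul_sum, ← Finset.mul_sum,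
          ← hAdef, ← hBdef]
        have hB : 0 < B := hBpos t ht1 htb
        have e2 : ((t * D - A) / B) * B = t * D - A := div_mul_cancel₀ _ hB.ne'
        by_cases hA : A = 0
        · have hs' : s = 0 := by rw [hA, zero_div] at hsb; linarith
          rw [e2, hs', hA]; ring
        · have hApos : 0 < A := lt_of_le_of_ne hAnn (Ne.symm hA)
          rw [e2]; field_simp; ring
      · exact absurd (hst.trans htb) hsb
      · -- both points on the second segment
        have es : ∀ r, γ s r = c r + ((s * D - A) / B) * (q r - c r) := by
          intro r; simp only [hγ]; rw [if_neg hsb]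
        have et : ∀ r, γ t r = c r + ((t * D - A) / B) * (q r - c r) := by
          intro r; simp only [hγ]; rw [if_neg htb]
        have hB : 0 < B := hBpos s hs1 hsb
        rw [Finset.sum_congr rfl fun r _ => by rw [es r, et r], hseg c q]
        rw [show (s * D - A) / B - (t * D - A) / B = -(((t - s) * D) / B) by
            field_simp; ring,
          abs_neg, abs_div, abs_of_nonneg (mul_nonneg (by linarith) hDpos.le),
          abs_of_pos hB]
        field_simp
        rfl
    refine ⟨γ, ?_, ?_, ?_, ?_, ?_⟩
    · -- continuity
      have : Continuous γ := by
        rw [hγ]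
        refine Continuous.if_le ?_ ?_ continuous_id continuous_const ?_
        · exact continuous_pi fun r => by fun_prop
        · exact continuous_pi fun r => by fun_prop
        · intro t htE
          have ht' : t * D = A := by rw [htE]; field_simp
          funext r
          by_cases hA : A = 0
          · rw [ht', hA, div_zero, zero_mul, add_zero, sub_self, zero_div,
              zero_mul, add_zero]
            exact hA0 hA r
          · rw [ht', div_self hA, one_mul, sub_self, zero_div, zero_mul,
              add_zero]
            ring
      exact this.continuousOn
    · -- γ 0 = p
      funext r
      have h0 : (0:ℝ) ≤ A / D := div_nonneg hAnn hDpos.le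
      simp only [hγ]
      rw [if_pos h0, zero_mul, zero_div, zero_mul, add_zero]
    · -- γ 1 = q
      funext r
      simp only [hγ]
      by_cases h1 : (1:ℝ) ≤ A / D
      · have hDA : D ≤ A := by have := (le_div_iff₀ hDpos).1 h1; linarith
        have hADeq : A = D := le_antisymm (by linarith) hDA
        have hB : B = 0 := by linarith
        rw [if_pos h1, one_mul, hADeq, div_self hD0, one_mul]
        have := hB0 hB r
        linarith
      · have hB : 0 < B := hBpos 1 le_rfl h1
        rw [if_neg h1, one_mul, show D - A = B by linarith, div_self hB.ne',
          one_mul]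
        ring
    · -- membership in the cone
      rintro t ⟨ht0, ht1⟩
      by_cases htb : t ≤ A / D
      · obtain ⟨hu0, hu1⟩ := hu01 t ht0 htb
        refine Set.mem_iUnion.2 ⟨i, fun r => ?_, fun r hr1 hr2 => ?_⟩
        · have : γ t r = p r + (t * D / A) * (c r - p r) := by
            simp only [hγ]; rw [if_pos htb]
          rw [this]
          nlinarith [mul_nonneg (sub_nonneg.2 hu1) (hpnn r),
            mul_nonneg hu0 (hcnn r)]
        · have h1 : γ t r = p r + (t * D / A) * (c r - p r) := by
            simp only [hγ]; rw [if_pos htb]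
          have h2 : p r = 0 := hpz r hr1 hr2
          have h3 : c r = 0 := by
            rw [hc]; simp only []
            rw [h2]; exact min_eq_left (hqnn r)
          rw [h1, h2, h3]; ring
      · obtain ⟨hv0, hv1⟩ := hv01 t ht1 (lt_of_not_ge htb)
        refine Set.mem_iUnion.2 ⟨j, fun r => ?_, fun r hr1 hr2 => ?_⟩
        · have : γ t r = c r + ((t * D - A) / B) * (q r - c r) := by
            simp only [hγ]; rw [if_neg htb]
          rw [this]
          nlinarith [mul_nonneg (sub_nonneg.2 hv1) (hcnn r),
            mul_nonneg hv0 (hqnn r)]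
        · have h1 : γ t r = c r + ((t * D - A) / B) * (q r - c r) := by
            simp only [hγ]; rw [if_neg htb]
          have h2 : q r = 0 := hqz r hr1 hr2
          have h3 : c r = 0 := by
            rw [hc]; simp only []
            rw [h2]; exact min_eq_right (hpnn r)
          rw [h1, h2, h3]; ring
    · -- the affine distance identity
      intro s hs t ht
      rcases le_total s t with h | h
      · rw [key s hs t ht h, abs_sub_comm, abs_of_nonneg (sub_nonneg.2 h)]
      · rw [Finset.sum_congr rfl fun r _ => abs_sub_comm (γ s r) (γ t r),
          key t ht s hs h, abs_of_nonneg (sub_nonneg.2 h)]
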